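/- For every integer k ≥ 2, Σ_{ν=1}^{k} |1/cos((π/k)(ν − 1/6))| ≤ 8·k·log(k). -/

import Mathlib

open Real

/-- Sum of reciprocals of distinct positive naturals is at most the harmonic number. -/
lemma recip_sum_le_aux : ∀ (n : ℕ) (S : Finset ℕ), S.card = n → (∀ i ∈ S, 1 ≤ i) →
    ∑ i ∈ S, ((i : ℝ))⁻¹ ≤ ∑ i ∈ Finset.Icc 1 n, ((i : ℝ))⁻¹ := by
  intro n
  induction n with
  | zero =>
    intro S hS _
    rw [Finset.card_eq_zero.mp hS]
    simp
  | succ n ih =>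
    intro S hS hpos
    have hne : S.Nonempty := Finset.card_pos.mp (by omega)
    set m := S.max' hne with hm
    have hmS : m ∈ S := S.max'_mem hne
    have hsub : S ⊆ Finset.Icc 1 m := by
      intro i hi
      exact Finset.mem_Icc.mpr ⟨hpos i hi, S.le_max' i hi⟩
    have hcard : S.card ≤ m := by
      have := Finset.card_le_card hsub
      simpa [Nat.card_Icc] using this
    have hm1 : 1 ≤ m := hpos m hmS
    have hrec : ((m : ℝ))⁻¹ ≤ ((n + 1 : ℕ) : ℝ)⁻¹ := by
      apply inv_anti₀
      · positivity
      · exact_mod_cast (by omega : n + 1 ≤ m)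
    have herase := ih (S.erase m) (by rw [Finset.card_erase_of_mem hmS, hS]; omega)
      (fun i hi => hpos i (Finset.mem_of_mem_erase hi))
    have hsum : ∑ i ∈ S, ((i : ℝ))⁻¹ = ((m : ℝ))⁻¹ + ∑ i ∈ S.erase m, ((i : ℝ))⁻¹ :=
      (Finset.add_sum_erase S _ hmS).symm
    have htop : ∑ i ∈ Finset.Icc 1 (n + 1), ((i : ℝ))⁻¹ =
        ∑ i ∈ Finset.Icc 1 n, ((i : ℝ))⁻¹ + ((n + 1 : ℕ) : ℝ)⁻¹ := by
      rw [← Finset.sum_Icc_succ_top (by omega : 1 ≤ n + 1)]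
    rw [hsum, htop]
    push_cast at hrec ⊢
    linarith

theorem sum_sec_bound (k : ℕ) (hk : 2 ≤ k) :
    ∑ ν ∈ Finset.Icc 1 k, |1 / Real.cos (Real.pi / k * (ν - 1 / 6))| ≤
      8 * k * Real.log k := by
  have hkR : (2 : ℝ) ≤ (k : ℝ) := by exact_mod_cast hk
  have hk0 : (0 : ℝ) < (k : ℝ) := by linarith
  set a : ℕ → ℕ := fun ν => ((6 * ν : ℤ) - (3 * k + 1)).natAbs with ha
  have ha1 : ∀ ν, 1 ≤ a ν := by
    intro ν
    simp only [ha]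
    omega
  -- cast of a
  have hacast : ∀ ν : ℕ, ((a ν : ℝ)) = |6 * (ν : ℝ) - (3 * (k : ℝ) + 1)| := by
    intro ν
    simp only [ha]
    rw [Nat.cast_natAbs]
    push_cast
    ring_nf
  -- pointwise bound
  have hpoint : ∀ ν ∈ Finset.Icc 1 k,
      |1 / Real.cos (Real.pi / k * (ν - 1 / 6))| ≤ 3 * (k : ℝ) * ((a ν : ℝ))⁻¹ := by
    intro ν hν
    obtain ⟨h1, h2⟩ := Finset.mem_Icc.mp hν
    set θ : ℝ := Real.pi / k * (ν - 1 / 6) with hθ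
    have hν1 : (1 : ℝ) ≤ (ν : ℝ) := by exact_mod_cast h1
    have hνk : (ν : ℝ) ≤ (k : ℝ) := by exact_mod_cast h2
    have hθ0 : 0 ≤ θ := by
      apply mul_nonneg (by positivity)
      linarith
    have hθπ : θ ≤ Real.pi := by
      rw [hθ, div_mul_eq_mul_div, mul_comm, ← div_mul_eq_mul_div]
      calc (↑ν - 1/6) / (k : ℝ) * Real.pi ≤ 1 * Real.pi := by
            apply mul_le_mul_of_nonneg_right _ Real.pi_pos.le
            rw [div_le_one hk0]; linarith
        _ = Real.pi := one_mul _
    have hdiff : Real.pi / 2 - θ = Real.pi / (6 * k) * ((3 * k + 1) - 6 * ν) := by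
      rw [hθ]
      field_simp
      ring
    have habs : |Real.pi / 2 - θ| = Real.pi * (a ν : ℝ) / (6 * k) := by
      rw [hdiff, abs_mul, abs_of_nonneg (by positivity : (0:ℝ) ≤ Real.pi / (6*k)),
        abs_sub_comm, ← hacast]
      ring
    have hbnd : |π/2 - θ| ≤ π/2 := by
      rw [abs_le]; constructor <;> linarith
    have hcos : (a ν : ℝ) / (3 * k) ≤ |Real.cos θ| := by
      have := Real.mul_abs_le_abs_sin (x := Real.pi / 2 - θ) hbnd
      rw [Real.sin_pi_div_two_sub, habs] at this
      have hπ : (0:ℝ) < Real.pi := Real.pi_pos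
      calc (a ν : ℝ) / (3 * k) = 2 / Real.pi * (Real.pi * (a ν : ℝ) / (6 * k)) := by
            field_simp; ring
        _ ≤ |Real.cos θ| := this
    have hapos : (0:ℝ) < (a ν : ℝ) := by exact_mod_cast ha1 ν
    have hcpos : (0:ℝ) < |Real.cos θ| := lt_of_lt_of_le (by positivity) hcos
    rw [abs_div, abs_one, div_le_iff₀ hcpos]
    calc (1:ℝ) = ((a ν : ℝ) / (3 * k)) * (3 * k * ((a ν : ℝ))⁻¹) := by
          field_simp
      _ ≤ |Real.cos θ| * (3 * k * ((a ν : ℝ))⁻¹) := by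
          apply mul_le_mul_of_nonneg_right hcos
          positivity
      _ = 3 * (k : ℝ) * ((a ν : ℝ))⁻¹ * |Real.cos θ| := by ring
  -- a is injective on Icc 1 k
  have hinj : Set.InjOn a (Finset.Icc 1 k) := by
    intro ν hν μ hμ hab
    simp only [Finset.coe_Icc, Set.mem_Icc] at hν hμ
    simp only [ha] at hab
    omega
  -- sum of reciprocals of a
  have hsuma : ∑ ν ∈ Finset.Icc 1 k, ((a ν : ℝ))⁻¹ ≤ 1 + Real.log k := by
    have himg : ∑ i ∈ (Finset.Icc 1 k).image a, ((i : ℝ))⁻¹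
        = ∑ ν ∈ Finset.Icc 1 k, ((a ν : ℝ))⁻¹ := by
      apply Finset.sum_image
      exact fun x hx y hy h => hinj (Finset.mem_coe.mpr hx) (Finset.mem_coe.mpr hy) h
    have hcard : ((Finset.Icc 1 k).image a).card = k := by
      rw [Finset.card_image_of_injOn hinj, Nat.card_Icc]; omega
    have hle := recip_sum_le_aux k ((Finset.Icc 1 k).image a) hcard
      (by intro i hi; obtain ⟨ν, _, rfl⟩ := Finset.mem_image.mp hi; exact ha1 ν)
    have hharm : ∑ i ∈ Finset.Icc 1 k, ((i : ℝ))⁻¹ = (harmonic k : ℝ) := by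
      rw [harmonic_eq_sum_Icc]
      push_cast
      rfl
    calc ∑ ν ∈ Finset.Icc 1 k, ((a ν : ℝ))⁻¹ ≤ ∑ i ∈ Finset.Icc 1 k, ((i : ℝ))⁻¹ := by
          rw [← himg]; exact hle
      _ = (harmonic k : ℝ) := hharm
      _ ≤ 1 + Real.log k := harmonic_le_one_add_log k
  have hlog2 : (0.6931471803 : ℝ) < Real.log 2 := Real.log_two_gt_d9
  have hlogk : Real.log 2 ≤ Real.log k := Real.log_le_log (by norm_num) hkR
  calc ∑ ν ∈ Finset.Icc 1 k, |1 / Real.cos (Real.pi / k * (ν - 1 / 6))|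
      ≤ ∑ ν ∈ Finset.Icc 1 k, 3 * (k : ℝ) * ((a ν : ℝ))⁻¹ := Finset.sum_le_sum hpoint
    _ = 3 * (k : ℝ) * ∑ ν ∈ Finset.Icc 1 k, ((a ν : ℝ))⁻¹ := by
        rw [Finset.mul_sum]
    _ ≤ 3 * (k : ℝ) * (1 + Real.log k) := by
        apply mul_le_mul_of_nonneg_left hsuma (by positivity)
    _ ≤ 8 * k * Real.log k := by nlinarith [Real.log_nonneg (by linarith : (1:ℝ) ≤ (k:ℝ))]
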